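/- Let k ≥ 1 be an integer and let t > 0 be real. Then |R̃_{k+1}(t) + (1/2)·arctan(e^{−πt})| < η_k · √(πk) · T̃_k(t) + (1/2)·e^{−πt}, where η_k := 1/(1 − 2^{1−2k}); that is, the error in the standard approximation of the Riemann–Siegel theta function (with the arctan term omitted) after k terms is bounded by η_k √(πk) T̃_k(t) + (1/2)e^{−πt}. -/

import Mathlib

open MeasureTheory Real

/-- The factor `η_k = 1 / (1 - 2 ^ (1 - 2k))`. -/
noncomputable def eta (k : ℕ) : ℝ := 1 / (1 - (2 : ℝ) ^ ((1 : ℤ) - 2 * k))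

/-- The `j`-th term of the asymptotic series for the Riemann–Siegel theta function. -/
noncomputable def Ttilde (j : ℕ) (t : ℝ) : ℝ :=
  |(Polynomial.aeval ((1 : ℝ) / 2) (Polynomial.bernoulli (2 * j)) : ℝ)| /
    ((4 * (j : ℝ)) * (2 * (j : ℝ) - 1) * t ^ (2 * j - 1))

/-- `Rtildenext k t` is the remainder `R̃_{k+1}(t)` after `k` terms of the series for `ϑ(t)`. -/
noncomputable def Rtildenext (k : ℕ) (t : ℝ) : ℝ :=
  (-∫ u in Set.Ioi (0 : ℝ),
      ((Polynomial.aeval (Int.fract (u + 1 / 2)) (Polynomial.bernoulli (2 * k)) : ℝ) : ℂ) /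
        ((4 * (k : ℂ)) * ((u : ℂ) + Complex.I * t) ^ (2 * k))).im

/-- `Rtilde k t` is the remainder `R̃_k(t)` after `k - 1` terms of the series for `ϑ(t)`. -/
noncomputable def Rtilde (k : ℕ) (t : ℝ) : ℝ := Ttilde k t + Rtildenext k t


noncomputable def Ssin (n : ℕ) : ℝ := ∫ x in (0:ℝ)..π, Real.sin x ^ n

lemma Ssin_pos (n : ℕ) : 0 < Ssin n := integral_sin_pow_pos n

lemma Ssin_succ_le (n : ℕ) : Ssin (n+1) ≤ Ssin n := integral_sin_pow_succ_le n

lemma Ssin_rec (n : ℕ) : Ssin (n+2) = (n+1)/(n+2) * Ssin n := by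
  have := integral_sin_pow (a := 0) (b := π) n
  simpa [Ssin, Real.sin_pi, Real.sin_zero] using this

lemma Ssin_zero : Ssin 0 = π := by simp [Ssin]

lemma Ssin_one : Ssin 1 = 2 := by simp [Ssin]; norm_num

lemma Ssin_mul_succ (n : ℕ) : Ssin n * Ssin (n+1) = 2 * π / (n+1) := by
  induction n with
  | zero => rw [Ssin_zero, Ssin_one]; push_cast; ring
  | succ m ih =>
    have h1 : Ssin (m+1+1) = ((m:ℝ)+1)/((m:ℝ)+2) * Ssin m := Ssin_rec m
    have hm2 : ((m:ℝ)+2) ≠ 0 := by positivity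
    have hm1 : ((m:ℝ)+1) ≠ 0 := by positivity
    rw [h1, mul_comm (Ssin (m+1)), mul_assoc, ih]
    push_cast
    field_simp
    ring

lemma Ssin_le_aux (m : ℕ) : Ssin (2*m) ≤ ((2*(m:ℝ)+2))/(2*(m:ℝ)+1) * Ssin (2*m+1) := by
  have hrec : Ssin (2*m+2) = (2*(m:ℝ)+1)/(2*(m:ℝ)+2) * Ssin (2*m) := by
    have h := Ssin_rec (2*m)
    rw [h]; push_cast; ring_nf
  have hle : Ssin (2*m+2) ≤ Ssin (2*m+1) := Ssin_succ_le (2*m+1)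
  rw [hrec] at hle
  have hpos1 : (0:ℝ) < 2*(m:ℝ)+1 := by positivity
  have hpos2 : (0:ℝ) < 2*(m:ℝ)+2 := by positivity
  rw [div_mul_eq_mul_div, div_le_iff₀ hpos2] at hle
  rw [div_mul_eq_mul_div, le_div_iff₀ hpos1]
  linarith

lemma Ssin_sq_le (k : ℕ) (hk : 1 ≤ k) :
    (2*(k:ℝ)-1) * Ssin (2*k-2) ≤ 2 * Real.sqrt (π * k) := by
  obtain ⟨m, rfl⟩ : ∃ m, k = m + 1 := ⟨k - 1, by omega⟩
  have hn : 2*(m+1) - 2 = 2*m := by omega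
  rw [hn]
  have hcast : (2*((m+1:ℕ):ℝ)-1) = (2*(m:ℝ)+1 : ℝ) := by push_cast; ring
  rw [hcast]
  have h1 := Ssin_le_aux m
  have h2 : Ssin (2*m) * Ssin (2*m+1) = 2*π/(2*(m:ℝ)+1) := by
    have h := Ssin_mul_succ (2*m)
    rw [h]; push_cast; ring_nf
  have hS := Ssin_pos (2*m)
  have hS1 := Ssin_pos (2*m+1)
  have hpos1 : (0:ℝ) < 2*(m:ℝ)+1 := by positivity
  have hsq : ((2*(m:ℝ)+1) * Ssin (2*m))^2 ≤ 4 * (π * ((m:ℝ)+1)) := by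
    have key : Ssin (2*m) * Ssin (2*m) ≤ ((2*(m:ℝ)+2))/(2*(m:ℝ)+1) * (2*π/(2*(m:ℝ)+1)) := by
      calc Ssin (2*m) * Ssin (2*m)
          ≤ (((2*(m:ℝ)+2))/(2*(m:ℝ)+1) * Ssin (2*m+1)) * Ssin (2*m) :=
            mul_le_mul_of_nonneg_right h1 hS.le
        _ = ((2*(m:ℝ)+2))/(2*(m:ℝ)+1) * (Ssin (2*m) * Ssin (2*m+1)) := by ring
        _ = ((2*(m:ℝ)+2))/(2*(m:ℝ)+1) * (2*π/(2*(m:ℝ)+1)) := by rw [h2]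
    have expand : ((2*(m:ℝ)+1))^2 * (((2*(m:ℝ)+2))/(2*(m:ℝ)+1) * (2*π/(2*(m:ℝ)+1)))
        = 2*π*(2*(m:ℝ)+2) := by field_simp
    have : ((2*(m:ℝ)+1) * Ssin (2*m))^2 = ((2*(m:ℝ)+1))^2 * (Ssin (2*m) * Ssin (2*m)) := by ring
    rw [this]
    calc ((2*(m:ℝ)+1))^2 * (Ssin (2*m) * Ssin (2*m))
        ≤ ((2*(m:ℝ)+1))^2 * (((2*(m:ℝ)+2))/(2*(m:ℝ)+1) * (2*π/(2*(m:ℝ)+1))) :=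
          mul_le_mul_of_nonneg_left key (by positivity)
      _ = 2*π*(2*(m:ℝ)+2) := expand
      _ = 4 * (π * ((m:ℝ)+1)) := by ring
  have hx : (0:ℝ) ≤ (2*(m:ℝ)+1) * Ssin (2*m) := by positivity
  have hy : (0:ℝ) ≤ π * ((m:ℝ)+1) := by positivity
  have step : (2*(m:ℝ)+1) * Ssin (2*m) ≤ Real.sqrt (4 * (π * ((m:ℝ)+1))) := by
    rw [show (2*(m:ℝ)+1) * Ssin (2*m) = Real.sqrt (((2*(m:ℝ)+1) * Ssin (2*m))^2) from
      (Real.sqrt_sq hx).symm]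
    exact Real.sqrt_le_sqrt hsq
  have s4 : Real.sqrt (4 * (π * ((m:ℝ)+1))) = 2 * Real.sqrt (π * ((m:ℝ)+1)) := by
    rw [show (4:ℝ) = 2^2 by norm_num, Real.sqrt_mul (by positivity), Real.sqrt_sq (by norm_num)]
  rw [s4] at step
  push_cast
  convert step using 3 <;> push_cast <;> ring


lemma tan_subst (m : ℕ) (t : ℝ) (ht : 0 < t) :
    IntegrableOn (fun u : ℝ => ((u^2+t^2)^(m+1))⁻¹) (Set.Ioi 0) ∧
    ∫ u in Set.Ioi (0:ℝ), ((u^2+t^2)^(m+1))⁻¹ = (1/2) * Ssin (2*m) / t^(2*m+1) := by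
  set s : Set ℝ := Set.Ioo 0 (π/2) with hs_def
  set g : ℝ → ℝ := fun u => ((u^2+t^2)^(m+1))⁻¹ with hg_def
  have hs : MeasurableSet s := measurableSet_Ioo
  have hcos : ∀ θ ∈ s, 0 < Real.cos θ := fun θ hθ =>
    Real.cos_pos_of_mem_Ioo ⟨by linarith [hθ.1, pi_div_two_pos], hθ.2⟩
  have hf' : ∀ θ ∈ s, HasDerivWithinAt (fun θ => t * Real.tan θ)
      (t * (1 / Real.cos θ ^ 2)) s θ := fun θ hθ =>
    ((Real.hasDerivAt_tan (hcos θ hθ).ne').const_mul t).hasDerivWithinAt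
  have hinj : Set.InjOn (fun θ => t * Real.tan θ) s := by
    intro a ha b hb hab
    have h1 : a ∈ Set.Ioo (-(π/2)) (π/2) := ⟨by linarith [ha.1, pi_div_two_pos], ha.2⟩
    have h2 : b ∈ Set.Ioo (-(π/2)) (π/2) := ⟨by linarith [hb.1, pi_div_two_pos], hb.2⟩
    exact Real.strictMonoOn_tan.injOn h1 h2 (mul_left_cancel₀ ht.ne' hab)
  have himg : (fun θ => t * Real.tan θ) '' s = Set.Ioi 0 := by
    ext u
    constructor
    · rintro ⟨θ, hθ, rfl⟩
      exact mul_pos ht (Real.tan_pos_of_pos_of_lt_pi_div_two hθ.1 hθ.2)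
    · intro hu
      refine ⟨Real.arctan (u/t), ⟨?_, Real.arctan_lt_pi_div_two _⟩, ?_⟩
      · have := Real.arctan_strictMono (div_pos hu ht)
        rwa [Real.arctan_zero] at this
      · show t * Real.tan (Real.arctan (u/t)) = u
        rw [Real.tan_arctan, mul_div_cancel₀ _ ht.ne']
  have heq : ∀ θ ∈ s, |t * (1 / Real.cos θ ^ 2)| • g (t * Real.tan θ)
      = Real.cos θ ^ (2*m) / t^(2*m+1) := by
    intro θ hθ
    have hc := hcos θ hθ
    have harg : (t * Real.tan θ)^2 + t^2 = t^2 / Real.cos θ ^ 2 := by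
      rw [Real.tan_eq_sin_div_cos]
      have hpy := Real.sin_sq_add_cos_sq θ
      field_simp
      nlinarith [hpy]
    have habs : |t * (1 / Real.cos θ ^ 2)| = t / Real.cos θ ^ 2 := by
      rw [abs_of_pos (by positivity), mul_one_div]
    rw [habs, hg_def]
    simp only [harg, smul_eq_mul]
    rw [div_pow, inv_div]
    rw [show (t^2)^(m+1) = t^(2*m+1) * t by rw [← pow_mul]; ring_nf,
        show (Real.cos θ^2)^(m+1) = Real.cos θ^(2*m) * Real.cos θ^2 by rw [← pow_mul]; ring_nf]
    field_simp
  have hcont : IntegrableOn (fun θ => Real.cos θ ^ (2*m) / t^(2*m+1)) s := by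
    exact (((Real.continuous_cos.pow (2*m)).div_const _).integrableOn_Icc (a := 0)
      (b := π/2)).mono_set Set.Ioo_subset_Icc_self
  have hint : IntegrableOn (fun θ => |t * (1 / Real.cos θ ^ 2)| • g (t * Real.tan θ)) s :=
    hcont.congr_fun (fun θ hθ => (heq θ hθ).symm) hs
  have hIoi : IntegrableOn g (Set.Ioi 0) := by
    rw [← himg, integrableOn_image_iff_integrableOn_abs_deriv_smul hs hf' hinj g]
    exact hint
  refine ⟨hIoi, ?_⟩
  rw [← himg, integral_image_eq_integral_abs_deriv_smul hs hf' hinj g]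
  rw [setIntegral_congr_fun hs heq]
  rw [integral_div]
  have : ∫ θ in s, Real.cos θ ^ (2*m) = (1/2) * Ssin (2*m) := by
    rw [hs_def, ← MeasureTheory.integral_Ioc_eq_integral_Ioo,
      ← intervalIntegral.integral_of_le (by positivity)]
    exact EulerSine.integral_cos_pow_eq (2*m)
  rw [this]

lemma two_pow_aux (k : ℕ) (hk : k ≠ 0) : (2:ℝ)^(2*k-1) * 2 = 2^(2*k) := by
  rw [← pow_succ]; congr 1; omega

lemma abs_tsum_le' (f : ℕ → ℝ) (hfs : Summable fun n : ℕ => |f n|) :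
    |∑' n : ℕ, f n| ≤ ∑' n : ℕ, |f n| := by
  rw [← Real.norm_eq_abs]
  refine le_trans (norm_tsum_le_tsum_norm ?_) ?_
  · simpa only [Real.norm_eq_abs] using hfs
  · simp only [Real.norm_eq_abs, le_refl]

lemma bern_abs_le (k : ℕ) (hk : k ≠ 0) {x : ℝ} (hx : x ∈ Set.Icc (0:ℝ) 1) :
    |((Polynomial.bernoulli (2*k)).map (algebraMap ℚ ℝ)).eval x|
      ≤ |((bernoulli (2*k) : ℚ) : ℝ)| := by
  have h1 := hasSum_one_div_nat_pow_mul_cos hk hx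
  have h2 := hasSum_zeta_nat hk
  set E : ℝ := ((Polynomial.bernoulli (2*k)).map (algebraMap ℚ ℝ)).eval x with hE
  set B : ℝ := ((bernoulli (2*k) : ℚ) : ℝ) with hB
  have hsum : Summable fun n : ℕ => 1/(n:ℝ)^(2*k) := h2.summable
  have hbound : ∀ n : ℕ, |1/(n:ℝ)^(2*k) * Real.cos (2*π*n*x)| ≤ 1/(n:ℝ)^(2*k) := by
    intro n
    rw [abs_mul, abs_of_nonneg (by positivity : (0:ℝ) ≤ 1/(n:ℝ)^(2*k))]
    calc 1/(n:ℝ)^(2*k) * |Real.cos (2*π*n*x)| ≤ 1/(n:ℝ)^(2*k) * 1 :=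
          mul_le_mul_of_nonneg_left (Real.abs_cos_le_one _) (by positivity)
      _ = 1/(n:ℝ)^(2*k) := mul_one _
  have hfs : Summable fun n : ℕ => |1/(n:ℝ)^(2*k) * Real.cos (2*π*n*x)| :=
    Summable.of_nonneg_of_le (fun n => abs_nonneg _) hbound hsum
  have key : |∑' n : ℕ, 1/(n:ℝ)^(2*k) * Real.cos (2*π*n*x)| ≤ ∑' n : ℕ, 1/(n:ℝ)^(2*k) := by
    calc |∑' n : ℕ, 1/(n:ℝ)^(2*k) * Real.cos (2*π*n*x)|
        ≤ ∑' n : ℕ, |1/(n:ℝ)^(2*k) * Real.cos (2*π*n*x)| := by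
          exact abs_tsum_le' _ hfs
      _ ≤ ∑' n : ℕ, 1/(n:ℝ)^(2*k) := Summable.tsum_le_tsum hbound hfs hsum
  rw [h1.tsum_eq, h2.tsum_eq] at key
  have e1 : |(-1:ℝ)^(k+1)| = 1 := by rw [abs_pow, abs_neg, abs_one, one_pow]
  have e3 : |((2*k).factorial : ℝ)| = (2*k).factorial := abs_of_pos (by positivity)
  have hZnn : (0:ℝ) ≤ (-1:ℝ)^(k+1) * 2^(2*k-1) * π^(2*k) * B / (2*k).factorial := by
    rw [← h2.tsum_eq]
    exact tsum_nonneg (fun n => by positivity)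
  set c : ℝ := 2^(2*k-1)*π^(2*k)/((2*k).factorial : ℝ) with hc
  have hcpos : 0 < c := by rw [hc]; positivity
  have hL : |(-1:ℝ)^(k+1) * (2*π)^(2*k)/2/((2*k).factorial : ℝ) * E| = c * |E| := by
    rw [abs_mul, abs_div, abs_div, abs_mul, e1, e3, one_mul, abs_two,
      abs_of_pos (by positivity : (0:ℝ) < (2*π)^(2*k)), hc, mul_pow, ← two_pow_aux k hk]
    ring
  have hR : (-1:ℝ)^(k+1) * 2^(2*k-1) * π^(2*k) * B / (2*k).factorial ≤ c * |B| := by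
    calc (-1:ℝ)^(k+1) * 2^(2*k-1) * π^(2*k) * B / (2*k).factorial
        = |(-1:ℝ)^(k+1) * 2^(2*k-1) * π^(2*k) * B / (2*k).factorial| :=
          (abs_of_nonneg hZnn).symm
      _ = c * |B| := by
          rw [abs_div, abs_mul, abs_mul, abs_mul, e1, e3, one_mul,
            abs_of_pos (by positivity : (0:ℝ) < (2:ℝ)^(2*k-1)),
            abs_of_pos (by positivity : (0:ℝ) < (π:ℝ)^(2*k)), hc]
          ring
      _ ≤ c * |B| := le_refl _
  have hfin : c * |E| ≤ c * |B| := by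
    calc c * |E| = |(-1:ℝ)^(k+1) * (2*π)^(2*k)/2/((2*k).factorial : ℝ) * E| := hL.symm
      _ ≤ (-1:ℝ)^(k+1) * 2^(2*k-1) * π^(2*k) * B / (2*k).factorial := key
      _ ≤ c * |B| := hR
  exact le_of_mul_le_mul_left hfin hcpos

lemma bern_half_eval (k : ℕ) (hk : k ≠ 0) :
    ((Polynomial.bernoulli (2*k)).map (algebraMap ℚ ℝ)).eval (1/2 : ℝ)
      = (2/(2:ℝ)^(2*k) - 1) * ((bernoulli (2*k) : ℚ) : ℝ) := by
  have hx : (1/2 : ℝ) ∈ Set.Icc (0:ℝ) 1 := by norm_num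
  have h1 := hasSum_one_div_nat_pow_mul_cos hk hx
  have h2 := hasSum_zeta_nat hk
  set E : ℝ := ((Polynomial.bernoulli (2*k)).map (algebraMap ℚ ℝ)).eval (1/2 : ℝ) with hE
  set B : ℝ := ((bernoulli (2*k) : ℚ) : ℝ) with hB
  have hfe : (fun n:ℕ => 1/(n:ℝ)^(2*k) * Real.cos (2*π*n*(1/2)))
      = fun n:ℕ => (-1:ℝ)^n * (1/(n:ℝ)^(2*k)) := by
    funext n
    have h' : 2*π*(n:ℝ)*(1/2) = (n:ℝ)*π - 0 := by ring
    rw [h', Real.cos_nat_mul_pi_sub, Real.cos_zero, mul_one]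
    ring
  rw [hfe] at h1
  have hinj : Function.Injective (fun n:ℕ => 2*n) := by
    intro a b h
    dsimp only at h
    omega
  have h0 : ∀ n ∉ Set.range (fun n:ℕ => 2*n), ((-1:ℝ)^n + 1)*(1/(n:ℝ)^(2*k)) = 0 := by
    intro n hn
    have hodd : Odd n := by
      rcases Nat.even_or_odd n with he | ho
      · obtain ⟨r, hr⟩ := he
        exact absurd (⟨r, by dsimp only; omega⟩ : n ∈ Set.range (fun n:ℕ => 2*n)) hn
      · exact ho
    rw [hodd.neg_one_pow]
    ring
  have hcomp : HasSum ((fun n:ℕ => ((-1:ℝ)^n+1)*(1/(n:ℝ)^(2*k))) ∘ (fun n:ℕ => 2*n))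
      (2/(2:ℝ)^(2*k) * ((-1:ℝ)^(k+1) * 2^(2*k-1) * π^(2*k) * B / ((2*k).factorial : ℝ))) := by
    have hml := h2.mul_left (2/(2:ℝ)^(2*k))
    convert hml using 1
    case e'_3 => rfl
    funext n
    simp only [Function.comp_apply]
    have hcast : (((2*n : ℕ)):ℝ)^(2*k) = 2^(2*k) * (n:ℝ)^(2*k) := by
      push_cast; rw [mul_pow]
    have hneg : (-1:ℝ)^(2*n) = 1 := by rw [pow_mul, neg_one_sq, one_pow]
    rw [hcast, hneg]
    rcases eq_or_ne (n:ℝ) 0 with h | h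
    · rw [h, zero_pow (by omega : 2*k ≠ 0)]
      simp
    · field_simp
      ring
  have heven : HasSum (fun n:ℕ => ((-1:ℝ)^n+1)*(1/(n:ℝ)^(2*k)))
      (2/(2:ℝ)^(2*k) * ((-1:ℝ)^(k+1) * 2^(2*k-1) * π^(2*k) * B / ((2*k).factorial : ℝ))) :=
    (hinj.hasSum_iff h0).mp hcomp
  have hsub : HasSum (fun n:ℕ => (-1:ℝ)^n * (1/(n:ℝ)^(2*k)))
      (2/(2:ℝ)^(2*k) * ((-1:ℝ)^(k+1) * 2^(2*k-1) * π^(2*k) * B / ((2*k).factorial : ℝ))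
        - (-1:ℝ)^(k+1) * 2^(2*k-1) * π^(2*k) * B / ((2*k).factorial : ℝ)) := by
    have hd := heven.sub h2
    convert hd using 1
    case e'_3 => rfl
    funext n
    ring
  have huniq : (-1:ℝ)^(k+1) * (2*π)^(2*k)/2/((2*k).factorial : ℝ) * E
      = 2/(2:ℝ)^(2*k) * ((-1:ℝ)^(k+1) * 2^(2*k-1) * π^(2*k) * B / ((2*k).factorial : ℝ))
        - (-1:ℝ)^(k+1) * 2^(2*k-1) * π^(2*k) * B / ((2*k).factorial : ℝ) :=
    h1.unique hsub
  have hAne : ((-1:ℝ)^(k+1) * (2*π)^(2*k)/2/((2*k).factorial : ℝ)) ≠ 0 := by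
    apply div_ne_zero (div_ne_zero (mul_ne_zero (pow_ne_zero _ (by norm_num)) (by positivity))
      (by norm_num)) (by positivity)
  apply mul_left_cancel₀ hAne
  rw [huniq, mul_pow, ← two_pow_aux k hk]
  ring
lemma arctan_lt_self {y : ℝ} (hy : 0 < y) : Real.arctan y < y := by
  have h0 : 0 < Real.arctan y := by
    have := Real.arctan_strictMono hy
    rwa [Real.arctan_zero] at this
  have h2 := Real.arctan_lt_pi_div_two y
  have := Real.lt_tan h0 h2
  rwa [Real.tan_arctan] at this

lemma aeval_eq_eval_map (x : ℝ) (p : Polynomial ℚ) :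
    (Polynomial.aeval x p : ℝ) = (p.map (algebraMap ℚ ℝ)).eval x := by
  rw [Polynomial.aeval_def, Polynomial.eval_map]

theorem abs_Rtildenext_add_arctan_lt (k : ℕ) (hk : 1 ≤ k) (t : ℝ) (ht : 0 < t) :
    |Rtildenext k t + 1 / 2 * Real.arctan (Real.exp (-(π * t)))| <
      eta k * Real.sqrt (π * k) * Ttilde k t + 1 / 2 * Real.exp (-(π * t)) := by
  obtain ⟨m, rfl⟩ : ∃ m, k = m + 1 := ⟨k - 1, by omega⟩
  set k := m + 1 with hk_def
  set B : ℝ := |((bernoulli (2*k) : ℚ) : ℝ)| with hB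
  have hkR : (0:ℝ) < (k:ℝ) := by positivity
  have hts := tan_subst m t ht
  -- the dominating function
  set g : ℝ → ℝ := fun u => B/(4*(k:ℝ)) * ((u^2+t^2)^(m+1))⁻¹ with hg
  have hgint : IntegrableOn g (Set.Ioi 0) := hts.1.const_mul _
  -- the complex integrand
  set F : ℝ → ℂ := fun u =>
      ((Polynomial.aeval (Int.fract (u + 1 / 2)) (Polynomial.bernoulli (2 * k)) : ℝ) : ℂ) /
        ((4 * (k : ℂ)) * ((u : ℂ) + Complex.I * t) ^ (2 * k)) with hF
  have hnorm : ∀ u : ℝ, 0 < u → ‖F u‖ ≤ g u := by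
    intro u hu
    have hzsq : ‖(u : ℂ) + Complex.I * t‖ ^ 2 = u^2 + t^2 := by
      rw [Complex.sq_norm]
      simp [Complex.normSq_apply]
      ring
    have hden : ‖(4 * (k : ℂ)) * ((u : ℂ) + Complex.I * t) ^ (2 * k)‖
        = 4*(k:ℝ) * (u^2+t^2)^(m+1) := by
      rw [norm_mul, norm_pow]
      congr 1
      · rw [show (4 * (k:ℂ)) = (((4*(k:ℝ)) : ℝ) : ℂ) by push_cast; ring, Complex.norm_real, Real.norm_eq_abs,
          abs_of_pos (by positivity)]
      · rw [show 2*k = 2*(m+1) from rfl, pow_mul, hzsq]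
    have hnum : |(Polynomial.aeval (Int.fract (u + 1 / 2)) (Polynomial.bernoulli (2 * k)) : ℝ)|
        ≤ B := by
      rw [aeval_eq_eval_map]
      exact bern_abs_le k (by omega)
        ⟨Int.fract_nonneg _, (Int.fract_lt_one _).le⟩
    have hdenpos : (0:ℝ) < 4*(k:ℝ) * (u^2+t^2)^(m+1) := by positivity
    rw [hF]
    simp only
    rw [norm_div, Complex.norm_real, Real.norm_eq_abs, hden]
    have hgu : g u = B / (4*(k:ℝ) * (u^2+t^2)^(m+1)) := by
      rw [hg]
      simp only
      rw [← div_eq_mul_inv, div_div]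
    rw [hgu]
    gcongr
  -- bound the remainder
  have hR : |Rtildenext k t| ≤ Real.sqrt (π * k) * (B / ((4*(k:ℝ)) * (2*(k:ℝ)-1) * t^(2*m+1))) := by
    have h1 : |Rtildenext k t| = |(∫ u in Set.Ioi (0:ℝ), F u).im| := by
      rw [Rtildenext, hF]
      simp only [Complex.neg_im, abs_neg]
    have h2 : |(∫ u in Set.Ioi (0:ℝ), F u).im| ≤ ‖∫ u in Set.Ioi (0:ℝ), F u‖ :=
      Complex.abs_im_le_norm _
    have h3 : ‖∫ u in Set.Ioi (0:ℝ), F u‖ ≤ ∫ u in Set.Ioi (0:ℝ), ‖F u‖ :=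
      MeasureTheory.norm_integral_le_integral_norm _
    have h4 : (∫ u in Set.Ioi (0:ℝ), ‖F u‖) ≤ ∫ u in Set.Ioi (0:ℝ), g u := by
      apply MeasureTheory.integral_mono_of_nonneg
      · exact Filter.Eventually.of_forall (fun u => norm_nonneg _)
      · exact hgint
      · filter_upwards [MeasureTheory.ae_restrict_mem measurableSet_Ioi] with u hu
        exact hnorm u hu
    have h5 : (∫ u in Set.Ioi (0:ℝ), g u) = B/(4*(k:ℝ)) * ((1/2) * Ssin (2*m) / t^(2*m+1)) := by
      rw [hg]
      simp only
      rw [MeasureTheory.integral_const_mul, hts.2]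
    have h6 : B/(4*(k:ℝ)) * ((1/2) * Ssin (2*m) / t^(2*m+1))
        ≤ Real.sqrt (π * k) * (B / ((4*(k:ℝ)) * (2*(k:ℝ)-1) * t^(2*m+1))) := by
      have hss := Ssin_sq_le k (by omega)
      rw [show 2*k-2 = 2*m by omega] at hss
      have h2k1 : (0:ℝ) < 2*(k:ℝ)-1 := by
        rw [hk_def]; push_cast; linarith [Nat.cast_nonneg (α := ℝ) m]
      have hhalf : (1/2) * Ssin (2*m) ≤ Real.sqrt (π * k) / (2*(k:ℝ)-1) := by
        rw [le_div_iff₀ h2k1]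
        linarith
      calc B/(4*(k:ℝ)) * ((1/2) * Ssin (2*m) / t^(2*m+1))
          ≤ B/(4*(k:ℝ)) * ((Real.sqrt (π * k) / (2*(k:ℝ)-1)) / t^(2*m+1)) := by
            apply mul_le_mul_of_nonneg_left _ (by positivity)
            exact div_le_div_of_nonneg_right hhalf (by positivity)
        _ = Real.sqrt (π * k) * (B / ((4*(k:ℝ)) * (2*(k:ℝ)-1) * t^(2*m+1))) := by
            field_simp
    calc |Rtildenext k t| = |(∫ u in Set.Ioi (0:ℝ), F u).im| := h1
      _ ≤ ‖∫ u in Set.Ioi (0:ℝ), F u‖ := h2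
      _ ≤ ∫ u in Set.Ioi (0:ℝ), ‖F u‖ := h3
      _ ≤ ∫ u in Set.Ioi (0:ℝ), g u := h4
      _ = B/(4*(k:ℝ)) * ((1/2) * Ssin (2*m) / t^(2*m+1)) := h5
      _ ≤ _ := h6
  -- identify eta * Ttilde
  have hc1 : (2:ℝ) ^ ((1 : ℤ) - 2 * (k:ℕ)) = 2/(2:ℝ)^(2*k) := by
    have hcast : ((1 : ℤ) - 2 * (k:ℕ)) = (1 : ℤ) - ((2*k : ℕ) : ℤ) := by push_cast; ring
    rw [hcast, zpow_sub₀ (by norm_num : (2:ℝ) ≠ 0), zpow_one, zpow_natCast]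
  have hclt : 2/(2:ℝ)^(2*k) < 1 := by
    rw [div_lt_one (by positivity)]
    calc (2:ℝ) < 4 := by norm_num
      _ = 2^2 := by norm_num
      _ ≤ 2^(2*k) := pow_le_pow_right₀ (by norm_num) (by omega)
  have hTeq : eta k * Ttilde k t = B / ((4*(k:ℝ)) * (2*(k:ℝ)-1) * t^(2*k-1)) := by
    have hne : (0:ℝ) < 1 - 2/(2:ℝ)^(2*k) := by linarith
    rw [eta, Ttilde, hc1, aeval_eq_eval_map, bern_half_eval k (by omega)]
    rw [abs_mul, abs_of_neg (by linarith : (2/(2:ℝ)^(2*k) - 1) < 0), ← hB,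
      show -(2/(2:ℝ)^(2*k) - 1) = (1 - 2/(2:ℝ)^(2*k)) from by ring]
    rw [mul_div_assoc, ← mul_assoc, one_div_mul_cancel hne.ne', one_mul]
  have harc : Real.arctan (Real.exp (-(π * t))) < Real.exp (-(π * t)) :=
    arctan_lt_self (Real.exp_pos _)
  have harcnn : 0 ≤ Real.arctan (Real.exp (-(π * t))) := by
    have := Real.arctan_strictMono (Real.exp_pos (-(π * t)))
    rw [Real.arctan_zero] at this
    linarith
  have hexp : 2*k-1 = 2*m+1 := by omega
  calc |Rtildenext k t + 1 / 2 * Real.arctan (Real.exp (-(π * t)))|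
      ≤ |Rtildenext k t| + |1 / 2 * Real.arctan (Real.exp (-(π * t)))| := abs_add_le _ _
    _ = |Rtildenext k t| + 1 / 2 * Real.arctan (Real.exp (-(π * t))) := by
        rw [abs_of_nonneg (show (0:ℝ) ≤ 1/2 * Real.arctan (Real.exp (-(π * t))) by linarith)]
    _ ≤ eta k * Real.sqrt (π * k) * Ttilde k t + 1 / 2 * Real.arctan (Real.exp (-(π * t))) := by
        have : eta k * Real.sqrt (π * k) * Ttilde k t
            = Real.sqrt (π * k) * (eta k * Ttilde k t) := by ring
        rw [this, hTeq, hexp]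
        linarith [hR]
    _ < eta k * Real.sqrt (π * k) * Ttilde k t + 1 / 2 * Real.exp (-(π * t)) := by
        linarith
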